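/- Let f be a transcendental entire function of finite order, i.e. limsup_{r→∞} (log log M(r))/(log r) < ∞, and suppose there exist n ∈ ℕ and 0 < q < 1 such that M(r) ≥ exp^{n+1}((log^n r)^q) for all sufficiently large r, where exp^{n+1} denotes the (n+1)-st iterate of the exponential function and log^n denotes the n-th iterate of the logarithm. Then f is weakly regular. -/

import Mathlib

open Set Filter

/-- The maximum modulus of `f` on the circle of radius `r`. -/
noncomputable def maxMod (f : ℂ → ℂ) (r : ℝ) : ℝ :=
  sSup ((fun z => ‖f z‖) '' {z : ℂ | ‖z‖ = r})

/-- The minimum modulus of `f` on the circle of radius `r`. -/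
noncomputable def minMod (f : ℂ → ℂ) (r : ℝ) : ℝ :=
  sInf ((fun z => ‖f z‖) '' {z : ℂ | ‖z‖ = r})

/-- `f` is a transcendental entire function: entire and not a polynomial. -/
def TranscendentalEntire (f : ℂ → ℂ) : Prop :=
  Differentiable ℂ f ∧ ¬ ∃ p : Polynomial ℂ, ∀ z, f z = p.eval z

/-- `μ_ε(r) = M(r)^ε`. -/
noncomputable def muEps (f : ℂ → ℂ) (ε : ℝ) (r : ℝ) : ℝ := (maxMod f r) ^ ε

/-- The fast escaping set `A(f)`. -/
def fastEscaping (f : ℂ → ℂ) : Set ℂ :=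
  {z : ℂ | ∀ R : ℝ, 0 < R → (∀ r ≥ R, r < maxMod f r) →
    ∃ ℓ : ℕ, ∀ n : ℕ, (maxMod f)^[n] R ≤ ‖f^[n + ℓ] z‖}

/-- The set `Q_ε(f)`. -/
def Qeps (f : ℂ → ℂ) (ε : ℝ) : Set ℂ :=
  {z : ℂ | ∀ R : ℝ, 0 < R → (∀ r ≥ R, r < muEps f ε r) →
    ∃ ℓ : ℕ, ∀ n : ℕ, (muEps f ε)^[n] R ≤ ‖f^[n + ℓ] z‖}

/-- The quite fast escaping set `Q(f) = ⋃_{0<ε<1} Q_ε(f)`. -/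
def Qset (f : ℂ → ℂ) : Set ℂ := ⋃ ε ∈ Ioo (0:ℝ) 1, Qeps f ε

/-- `f` is `ε`-regular. -/
def epsRegular (f : ℂ → ℂ) (ε : ℝ) : Prop :=
  ∀ R : ℝ, 0 < R → (∀ r ≥ R, r < maxMod f r) →
    ∃ r : ℝ, 0 < r ∧ ∀ n : ℕ, (maxMod f)^[n] R ≤ (muEps f ε)^[n] r

/-- `f` is weakly regular: `ε`-regular for every `ε ∈ (0,1)`. -/
def weaklyRegular (f : ℂ → ℂ) : Prop := ∀ ε ∈ Ioo (0:ℝ) 1, epsRegular f ε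

/-- `f` is log-regular (characterization from Corollary 4.3). -/
def logRegular (f : ℂ → ℂ) : Prop :=
  ∃ r₁ > (1:ℝ), ∃ k > (1:ℝ), ∃ d > (1:ℝ), ∀ r ≥ r₁,
    (maxMod f r) ^ (k * d) ≤ maxMod f (r ^ k)

/-! ### Auxiliary lemmas about iterated exponentials and logarithms -/

lemma expIter_mono (k : ℕ) : Monotone (Real.exp^[k]) := Real.exp_monotone.iterate k

lemma le_expIter (k : ℕ) (x : ℝ) : x ≤ Real.exp^[k] x := by
  induction k with
  | zero => simp
  | succ k ih =>
    rw [Function.iterate_succ_apply']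
    have := Real.add_one_le_exp (Real.exp^[k] x)
    linarith

lemma logIter_expIter (k : ℕ) (x : ℝ) : Real.log^[k] (Real.exp^[k] x) = x := by
  induction k with
  | zero => simp
  | succ k ih =>
    rw [Function.iterate_succ_apply' Real.exp, Function.iterate_succ_apply Real.log,
      Real.log_exp, ih]

lemma expIter_logIter (k : ℕ) : ∀ {s : ℝ}, Real.exp^[k] 1 ≤ s →
    Real.exp^[k] (Real.log^[k] s) = s := by
  induction k with
  | zero => intro s _; simp
  | succ k ih =>
    intro s hs
    have hs0 : (0:ℝ) < s := by
      have h1 : (0:ℝ) < Real.exp^[k+1] 1 := by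
        rw [Function.iterate_succ_apply']; exact Real.exp_pos _
      linarith
    have h1 : Real.exp^[k] 1 ≤ Real.log s := by
      rw [Real.le_log_iff_exp_le hs0, ← Function.iterate_succ_apply' Real.exp]
      exact hs
    rw [Function.iterate_succ_apply Real.log, Function.iterate_succ_apply' Real.exp,
      ih h1, Real.exp_log hs0]

lemma logIter_mono_ge (k : ℕ) : ∀ {a s t : ℝ}, 1 ≤ a → Real.exp^[k] a ≤ s → s ≤ t →
    a ≤ Real.log^[k] s ∧ Real.log^[k] s ≤ Real.log^[k] t := by
  induction k with
  | zero =>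
    intro a s t _ hs hst
    simpa using ⟨hs, hst⟩
  | succ k ih =>
    intro a s t ha hs hst
    have hs' : Real.exp^[k] (Real.exp a) ≤ s := by
      rwa [Function.iterate_succ_apply] at hs
    have ha' : 1 ≤ Real.exp a := Real.one_le_exp (by linarith)
    obtain ⟨h1, h2⟩ := ih ha' hs' hst
    have hpos : 0 < Real.log^[k] s := lt_of_lt_of_le (Real.exp_pos a) h1
    refine ⟨?_, ?_⟩
    · rw [Function.iterate_succ_apply' Real.log]
      exact (Real.le_log_iff_exp_le hpos).2 h1
    · rw [Function.iterate_succ_apply' Real.log, Function.iterate_succ_apply' Real.log]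
      exact Real.log_le_log hpos h2

lemma tendsto_logIter (k : ℕ) : Tendsto (Real.log^[k]) atTop atTop := by
  induction k with
  | zero => exact tendsto_id
  | succ k ih =>
    rw [Function.iterate_succ]
    exact ih.comp Real.tendsto_log_atTop

lemma logIter_sq (k : ℕ) : ∀ᶠ x in atTop,
    Real.log^[k] (x * x) ≤ Real.log^[k] x * Real.log^[k] x := by
  induction k with
  | zero => exact Eventually.of_forall (fun x => le_rfl)
  | succ k ih =>
    have h1 : ∀ᶠ x : ℝ in atTop, (0:ℝ) < x := eventually_gt_atTop 0
    have h2 : ∀ᶠ x : ℝ in atTop, max 2 (Real.exp^[k] 1) ≤ Real.log x :=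
      Real.tendsto_log_atTop.eventually (eventually_ge_atTop _)
    have h3 := Real.tendsto_log_atTop.eventually ih
    filter_upwards [h1, h2, h3] with x hx0 hxl hih
    have hl2 : (2:ℝ) ≤ Real.log x := le_trans (le_max_left _ _) hxl
    have hlE : Real.exp^[k] 1 ≤ Real.log x := le_trans (le_max_right _ _) hxl
    have hlog : Real.log (x * x) = Real.log x + Real.log x :=
      Real.log_mul (ne_of_gt hx0) (ne_of_gt hx0)
    rw [Function.iterate_succ_apply Real.log, Function.iterate_succ_apply Real.log, hlog]
    have hE1 : Real.exp^[k] 1 ≤ Real.log x + Real.log x := by linarith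
    have hsum : Real.log x + Real.log x ≤ Real.log x * Real.log x := by nlinarith
    exact le_trans (logIter_mono_ge k le_rfl hE1 hsum).2 hih

lemma logIter_exp_exp (k : ℕ) (x : ℝ) :
    Real.log^[k+2] (Real.exp (Real.exp x)) = Real.log^[k] x := by
  rw [Function.iterate_succ_apply, Real.log_exp, Function.iterate_succ_apply, Real.log_exp]

lemma key_growth (A : ℝ) (hA : 1 ≤ A) : ∀ (k : ℕ) (C : ℝ), 1 ≤ C →
    ∀ᶠ w in atTop, C * Real.exp^[k] (Real.exp (2*A*w)) ≤ Real.exp (Real.exp^[k] (w*w)) := by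
  intro k
  induction k with
  | zero =>
    intro C hC
    filter_upwards [eventually_ge_atTop (2*A + Real.log C + 1), eventually_ge_atTop (1:ℝ)]
      with w hw hw1
    have hC0 : (0:ℝ) < C := lt_of_lt_of_le one_pos hC
    have hlc : 0 ≤ Real.log C := Real.log_nonneg hC
    have hkey : Real.log C + 2*A*w ≤ w*w := by
      nlinarith [mul_le_mul_of_nonneg_right hw (by linarith : (0:ℝ) ≤ w),
        mul_nonneg hlc (by linarith : (0:ℝ) ≤ w - 1)]
    calc C * Real.exp^[0] (Real.exp (2*A*w)) = Real.exp (Real.log C + 2*A*w) := by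
          simp [Real.exp_add, Real.exp_log hC0]
      _ ≤ Real.exp (w*w) := Real.exp_le_exp.2 hkey
      _ = Real.exp (Real.exp^[0] (w*w)) := by simp
  | succ k ih =>
    intro C hC
    have hC0 : (0:ℝ) < C := lt_of_lt_of_le one_pos hC
    filter_upwards [ih 2 one_le_two, eventually_ge_atTop (max 1 (Real.log C))] with w hw hwc
    have hw1 : (1:ℝ) ≤ w := le_trans (le_max_left _ _) hwc
    have hEk : Real.log C ≤ Real.exp^[k] (Real.exp (2*A*w)) := by
      have h3 : Real.log C ≤ w := le_trans (le_max_right _ _) hwc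
      have h4 : w ≤ 2*A*w := by nlinarith
      have h5 : 2*A*w ≤ Real.exp (2*A*w) := by linarith [Real.add_one_le_exp (2*A*w)]
      have h6 := le_expIter k (Real.exp (2*A*w))
      linarith
    rw [Function.iterate_succ_apply' Real.exp k (Real.exp (2*A*w)),
      Function.iterate_succ_apply' Real.exp k (w*w)]
    have hkey : Real.log C + Real.exp^[k] (Real.exp (2*A*w)) ≤ Real.exp (Real.exp^[k] (w*w)) := by
      linarith
    calc C * Real.exp (Real.exp^[k] (Real.exp (2*A*w)))
        = Real.exp (Real.log C + Real.exp^[k] (Real.exp (2*A*w))) := by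
          rw [Real.exp_add, Real.exp_log hC0]
      _ ≤ Real.exp (Real.exp (Real.exp^[k] (w*w))) := Real.exp_le_exp.2 hkey

lemma bump (M : ℝ → ℝ) (n : ℕ) {q : ℝ} (hq : q ∈ Set.Ioo (0:ℝ) 1)
    (hf : ∀ᶠ r in atTop, Real.exp^[n+1] ((Real.log^[n] r) ^ q) ≤ M r) :
    ∀ᶠ r in atTop, Real.exp^[n+1+1] ((Real.log^[n+1] r) ^ q) ≤ M r := by
  obtain ⟨hq0, hq1⟩ := hq
  have hts : ∀ᶠ t : ℝ in atTop, t ^ (q - 1) ≤ q := by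
    have h0 := tendsto_rpow_neg_atTop (y := 1 - q) (by linarith)
    have h1 : ∀ᶠ t : ℝ in atTop, t ^ (-(1-q)) < q := h0.eventually_lt_const hq0
    have he : -(1-q) = q - 1 := by ring
    rw [he] at h1
    exact h1.mono (fun t ht => ht.le)
  have humain : ∀ᶠ u : ℝ in atTop, Real.exp ((Real.log u)^q) ≤ u ^ q := by
    filter_upwards [eventually_gt_atTop (0:ℝ),
      Real.tendsto_log_atTop.eventually (hts.and (eventually_ge_atTop (1:ℝ)))] with u hu0 hl
    obtain ⟨hlq, hl1⟩ := hl
    have hl0 : 0 < Real.log u := lt_of_lt_of_le one_pos hl1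
    have h1 : (Real.log u)^q = (Real.log u)^(q-1) * Real.log u := by
      have h1' : (Real.log u)^q = (Real.log u)^(q-1) * (Real.log u)^(1:ℝ) := by
        rw [← Real.rpow_add hl0]; norm_num
      rwa [Real.rpow_one] at h1'
    have h2 : (Real.log u)^q ≤ q * Real.log u := by
      rw [h1]; exact mul_le_mul_of_nonneg_right hlq hl0.le
    have h3 : u ^ q = Real.exp (Real.log u * q) := by
      rw [Real.rpow_def_of_pos hu0]
    rw [h3]
    exact Real.exp_le_exp.2 (by linarith [mul_comm q (Real.log u)])
  have hLn := (tendsto_logIter n).eventually humain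
  filter_upwards [hf, hLn] with r h1 h2
  have e1 : Real.log^[n+1] r = Real.log (Real.log^[n] r) :=
    Function.iterate_succ_apply' Real.log n r
  have e2 : Real.exp^[n+1+1] ((Real.log^[n+1] r)^q)
      = Real.exp^[n+1] (Real.exp ((Real.log (Real.log^[n] r))^q)) := by
    rw [e1, Function.iterate_succ_apply Real.exp]
  rw [e2]
  exact le_trans (expIter_mono (n+1) h2) h1

/-! ### Auxiliary lemmas about the maximum modulus -/

lemma sphere_eq' (r : ℝ) : {z : ℂ | ‖z‖ = r} = Metric.sphere (0:ℂ) r := by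
  ext z; simp [Metric.mem_sphere, Complex.dist_eq]

lemma maxMod_ge (f : ℂ → ℂ) (hf : Differentiable ℂ f) {r : ℝ} {z : ℂ}
    (hz : ‖z‖ = r) : ‖f z‖ ≤ maxMod f r := by
  have hbdd : BddAbove ((fun z => ‖f z‖) '' {z : ℂ | ‖z‖ = r}) := by
    have hcpt : IsCompact ((fun z => ‖f z‖) '' {z : ℂ | ‖z‖ = r}) := by
      rw [sphere_eq']
      exact (isCompact_sphere 0 r).image (continuous_norm.comp hf.continuous)
    exact hcpt.bddAbove
  exact le_csSup hbdd ⟨z, hz, rfl⟩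

lemma maxMod_nonneg (f : ℂ → ℂ) (hf : Differentiable ℂ f) {r : ℝ} (hr : 0 ≤ r) :
    0 ≤ maxMod f r := by
  have h : ‖((r:ℂ))‖ = r := by
    simp [abs_of_nonneg hr]
  exact le_trans (norm_nonneg _) (maxMod_ge f hf h)

lemma maxMod_mono (f : ℂ → ℂ) (hf : Differentiable ℂ f) {x y : ℝ}
    (hx : 0 ≤ x) (hxy : x ≤ y) : maxMod f x ≤ maxMod f y := by
  rcases eq_or_lt_of_le hxy with rfl | hlt
  · exact le_rfl
  have hy0 : y ≠ 0 := ne_of_gt (lt_of_le_of_lt hx hlt)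
  apply Real.sSup_le
  · rintro a ⟨z, hz, rfl⟩
    have hz' : ‖z‖ = x := hz
    have hb : ∀ w ∈ frontier (Metric.ball (0:ℂ) y), ‖f w‖ ≤ maxMod f y := by
      rw [frontier_ball (0:ℂ) hy0]
      intro w hw
      have hw' : ‖w‖ = y := by
        simpa [Complex.dist_eq] using hw
      exact maxMod_ge f hf hw'
    have hzmem : z ∈ closure (Metric.ball (0:ℂ) y) := by
      rw [closure_ball (0:ℂ) hy0]
      simp only [Metric.mem_closedBall, Complex.dist_eq, sub_zero]
      rw [hz']; exact hxy
    have := Complex.norm_le_of_forall_mem_frontier_norm_le Metric.isBounded_ball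
      hf.diffContOnCl hb hzmem
    simpa using this
  · exact maxMod_nonneg f hf (le_trans hx hxy)

set_option maxHeartbeats 1000000 in
theorem stmt_13 (f : ℂ → ℂ) (hf : TranscendentalEntire f)
    (horder : ∃ ρ : ℝ, ∀ᶠ r in atTop,
      Real.log (Real.log (maxMod f r)) / Real.log r ≤ ρ)
    (h : ∃ n : ℕ, ∃ q ∈ Ioo (0:ℝ) 1, ∀ᶠ r in atTop,
      Real.exp^[n + 1] ((Real.log^[n] r) ^ q) ≤ maxMod f r) :
    weaklyRegular f := by
  obtain ⟨hdiff, -⟩ := hf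
  intro ε hε R hR0 hR
  obtain ⟨hε0, hε1⟩ := hε
  obtain ⟨ρ₀, hρ₀⟩ := horder
  obtain ⟨n0, q, hq, hlow0⟩ := h
  have hq0 := hq.1
  have hq1 := hq.2
  set ρ := max ρ₀ 1 with hρdef
  have hρ1 : (1:ℝ) ≤ ρ := le_max_right _ _
  have hlow1 := bump (maxMod f) n0 hq hlow0
  have hlow2 := bump (maxMod f) (n0+1) hq hlow1
  have hlow3 := bump (maxMod f) (n0+1+1) hq hlow2
  have hlow : ∀ᶠ r in atTop, Real.exp^[n0+4] ((Real.log^[n0+3] r)^q) ≤ maxMod f r := hlow3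
  obtain ⟨Rh, hRh⟩ := eventually_atTop.mp hlow
  set A := 2 + 2/q with hAdef
  have h2q : 0 < 2/q := by positivity
  have hA1 : (1:ℝ) ≤ A := by rw [hAdef]; linarith
  have hAq : 2 ≤ A * q := by
    rw [hAdef, add_mul, div_mul_cancel₀ _ (ne_of_gt hq0)]
    nlinarith
  have hεinv : (1:ℝ) ≤ ε⁻¹ := by
    have h1 : 0 < ε⁻¹ := inv_pos.2 hε0
    have h2 : ε * ε⁻¹ = 1 := mul_inv_cancel₀ (ne_of_gt hε0)
    nlinarith
  set g : ℝ → ℝ := fun s => Real.exp^[n0+3] ((Real.log^[n0+3] s) ^ A) with hgdef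
  -- The key eventual statement
  have key : ∀ᶠ s in atTop, s < maxMod f s →
      (s ≤ g s ∧ g (maxMod f s) ≤ (maxMod f (g s)) ^ ε) := by
    have k1 : ∀ᶠ s : ℝ in atTop, Real.exp^[n0+3] 1 ≤ s := eventually_ge_atTop _
    have k3 : ∀ᶠ s : ℝ in atTop, max ρ (Real.exp^[n0+1] 1) ≤ Real.log s :=
      Real.tendsto_log_atTop.eventually (eventually_ge_atTop _)
    have k4 : ∀ᶠ s : ℝ in atTop, Rh ≤ s := eventually_ge_atTop _
    have k5 := Real.tendsto_log_atTop.eventually (logIter_sq (n0+1))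
    have k6 := (tendsto_logIter (n0+3)).eventually (key_growth A hA1 (n0+2) ε⁻¹ hεinv)
    filter_upwards [k1, hρ₀, k3, k4, k5, k6] with s hk1 hk2 hk3 hk4 hk5 hk6 hsM
    set w := Real.log^[n0+3] s with hwdef
    have hw1 : 1 ≤ w := (logIter_mono_ge (n0+3) le_rfl hk1 le_rfl).1
    have hwA : w ≤ w ^ A := by
      calc w = w ^ (1:ℝ) := (Real.rpow_one w).symm
        _ ≤ w ^ A := Real.rpow_le_rpow_of_exponent_le hw1 hA1
    have hC1 : s ≤ g s := by
      calc s = Real.exp^[n0+3] (Real.log^[n0+3] s) := (expIter_logIter (n0+3) hk1).symm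
        _ ≤ Real.exp^[n0+3] (w ^ A) := expIter_mono _ hwA
        _ = g s := rfl
    refine ⟨hC1, ?_⟩
    have h1E : (1:ℝ) ≤ Real.exp^[n0+3] 1 := le_expIter _ 1
    have hs1 : (1:ℝ) ≤ s := le_trans h1E hk1
    have hMs1 : 1 < maxMod f s := lt_of_le_of_lt hs1 hsM
    have hlsρ : ρ ≤ Real.log s := le_trans (le_max_left _ _) hk3
    have hlsE : Real.exp^[n0+1] 1 ≤ Real.log s := le_trans (le_max_right _ _) hk3
    have hls : (1:ℝ) ≤ Real.log s := by linarith
    have hls0 : (0:ℝ) < Real.log s := by linarith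
    have hlog2 : Real.log (Real.log (maxMod f s)) ≤ ρ * Real.log s := by
      have hd := (div_le_iff₀ hls0).1 hk2
      have hρρ : ρ₀ ≤ ρ := le_max_left _ _
      exact le_trans hd (mul_le_mul_of_nonneg_right hρρ hls0.le)
    have hlMpos : 0 < Real.log (maxMod f s) := Real.log_pos hMs1
    have hMfle : maxMod f s ≤ Real.exp (Real.exp (ρ * Real.log s)) := by
      have h1 : Real.log (maxMod f s) ≤ Real.exp (ρ * Real.log s) := by
        calc Real.log (maxMod f s) = Real.exp (Real.log (Real.log (maxMod f s))) :=
            (Real.exp_log hlMpos).symm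
          _ ≤ Real.exp (ρ * Real.log s) := Real.exp_le_exp.2 hlog2
      calc maxMod f s = Real.exp (Real.log (maxMod f s)) :=
          (Real.exp_log (by linarith : (0:ℝ) < maxMod f s)).symm
        _ ≤ _ := Real.exp_le_exp.2 h1
    have hEmM : Real.exp^[n0+3] 1 ≤ maxMod f s := le_trans hk1 hsM.le
    have hB2 : Real.log^[n0+3] (maxMod f s) ≤ Real.log^[n0+1] (ρ * Real.log s) := by
      calc Real.log^[n0+3] (maxMod f s)
          ≤ Real.log^[n0+3] (Real.exp (Real.exp (ρ * Real.log s))) :=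
            (logIter_mono_ge (n0+3) le_rfl hEmM hMfle).2
        _ = Real.log^[n0+1] (ρ * Real.log s) := logIter_exp_exp (n0+1) _
    have hB3 : Real.log^[n0+1] (ρ * Real.log s) ≤
        Real.log^[n0+1] (Real.log s * Real.log s) := by
      refine (logIter_mono_ge (n0+1) le_rfl ?_ ?_).2
      · exact le_trans hlsE (le_mul_of_one_le_left hls0.le hρ1)
      · exact mul_le_mul_of_nonneg_right hlsρ hls0.le
    have hid1 : Real.log^[n0+1] (Real.log s) = Real.log^[n0+2] s :=
      (Function.iterate_succ_apply Real.log (n0+1) s).symm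
    have hL2 : 1 ≤ Real.log^[n0+2] s := by
      have hE2 : Real.exp^[n0+2] 1 ≤ s := by
        have h1e : (1:ℝ) ≤ Real.exp 1 := Real.one_le_exp zero_le_one
        have h12 : Real.exp^[n0+2] 1 ≤ Real.exp^[n0+3] 1 := by
          calc Real.exp^[n0+2] 1 ≤ Real.exp^[n0+2] (Real.exp 1) := expIter_mono _ h1e
            _ = Real.exp^[n0+3] 1 := (Function.iterate_succ_apply Real.exp (n0+2) 1).symm
        linarith
      exact (logIter_mono_ge (n0+2) le_rfl hE2 le_rfl).1
    have hexpw : Real.exp w = Real.log^[n0+2] s := by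
      have hww : w = Real.log (Real.log^[n0+2] s) := Function.iterate_succ_apply' Real.log (n0+2) s
      rw [hww, Real.exp_log (by linarith : (0:ℝ) < Real.log^[n0+2] s)]
    have hBfin : Real.log^[n0+3] (maxMod f s) ≤ Real.exp (w + w) := by
      rw [Real.exp_add]
      calc Real.log^[n0+3] (maxMod f s) ≤ Real.log^[n0+1] (ρ * Real.log s) := hB2
        _ ≤ Real.log^[n0+1] (Real.log s * Real.log s) := hB3
        _ ≤ Real.log^[n0+1] (Real.log s) * Real.log^[n0+1] (Real.log s) := hk5
        _ = Real.log^[n0+2] s * Real.log^[n0+2] s := by rw [hid1]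
        _ = Real.exp w * Real.exp w := by rw [hexpw]
    have hBge1 : 1 ≤ Real.log^[n0+3] (maxMod f s) :=
      (logIter_mono_ge (n0+3) le_rfl hEmM le_rfl).1
    have hBA : (Real.log^[n0+3] (maxMod f s)) ^ A ≤ Real.exp (2*A*w) := by
      calc (Real.log^[n0+3] (maxMod f s)) ^ A ≤ (Real.exp (w+w)) ^ A :=
          Real.rpow_le_rpow (by linarith) hBfin (by linarith)
        _ = Real.exp ((w+w)*A) := (Real.exp_mul _ _).symm
        _ = Real.exp (2*A*w) := by ring_nf
    have hgMf : g (maxMod f s) ≤ Real.exp (Real.exp^[n0+2] (Real.exp (2*A*w))) := by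
      calc g (maxMod f s) ≤ Real.exp^[n0+3] (Real.exp (2*A*w)) := expIter_mono _ hBA
        _ = Real.exp (Real.exp^[n0+2] (Real.exp (2*A*w))) :=
          Function.iterate_succ_apply' Real.exp (n0+2) _
    have hgsRh : Rh ≤ g s := le_trans hk4 hC1
    have hlowgs := hRh _ hgsRh
    have hLgs : Real.log^[n0+3] (g s) = w ^ A := logIter_expIter (n0+3) (w ^ A)
    have hw0 : (0:ℝ) ≤ w := by linarith
    have he3 : (w ^ A) ^ q = w ^ (A*q) := (Real.rpow_mul hw0 A q).symm
    rw [hLgs, he3] at hlowgs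
    have hexpY : Real.exp^[n0+4] (w^(A*q)) = Real.exp (Real.exp^[n0+3] (w^(A*q))) :=
      Function.iterate_succ_apply' Real.exp (n0+3) _
    have h6 : Real.exp (Real.exp^[n0+3] (w^(A*q)) * ε) ≤ (maxMod f (g s)) ^ ε := by
      calc Real.exp (Real.exp^[n0+3] (w^(A*q)) * ε)
          = (Real.exp (Real.exp^[n0+3] (w^(A*q)))) ^ ε := Real.exp_mul _ _
        _ = (Real.exp^[n0+4] (w^(A*q))) ^ ε := by rw [hexpY]
        _ ≤ (maxMod f (g s)) ^ ε := by
            apply Real.rpow_le_rpow _ hlowgs hε0.le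
            rw [hexpY]; exact (Real.exp_pos _).le
    have h2cast : w ^ (2:ℝ) = w * w := by
      rw [show (2:ℝ) = ((2:ℕ):ℝ) by norm_num, Real.rpow_natCast, pow_two]
    have hYww : w*w ≤ w ^ (A*q) := by
      rw [← h2cast]
      exact Real.rpow_le_rpow_of_exponent_le hw1 hAq
    have h7 : ε⁻¹ * Real.exp^[n0+2] (Real.exp (2*A*w)) ≤ Real.exp^[n0+3] (w^(A*q)) := by
      calc ε⁻¹ * Real.exp^[n0+2] (Real.exp (2*A*w))
          ≤ Real.exp (Real.exp^[n0+2] (w*w)) := hk6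
        _ = Real.exp^[n0+3] (w*w) := (Function.iterate_succ_apply' Real.exp (n0+2) _).symm
        _ ≤ Real.exp^[n0+3] (w^(A*q)) := expIter_mono _ hYww
    have h8 : Real.exp^[n0+2] (Real.exp (2*A*w)) ≤ Real.exp^[n0+3] (w^(A*q)) * ε := by
      have h9 := mul_le_mul_of_nonneg_left h7 hε0.le
      rw [← mul_assoc, mul_inv_cancel₀ (ne_of_gt hε0), one_mul] at h9
      linarith
    calc g (maxMod f s) ≤ Real.exp (Real.exp^[n0+2] (Real.exp (2*A*w))) := hgMf
      _ ≤ Real.exp (Real.exp^[n0+3] (w^(A*q)) * ε) := Real.exp_le_exp.2 h8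
      _ ≤ (maxMod f (g s)) ^ ε := h6
  -- Main assembly
  obtain ⟨S, hS⟩ := eventually_atTop.mp key
  set s₀ := max R S with hs₀def
  have hRs₀ : R ≤ s₀ := le_max_left _ _
  have hSs₀ : S ≤ s₀ := le_max_right _ _
  have horbit : ∀ k : ℕ, R ≤ (maxMod f)^[k] R ∧
      (maxMod f)^[k] R ≤ (maxMod f)^[k] s₀ ∧ s₀ ≤ (maxMod f)^[k] s₀ := by
    intro k
    induction k with
    | zero =>
      simp only [Function.iterate_zero_apply]
      exact ⟨le_rfl, hRs₀, le_rfl⟩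
    | succ k ih =>
      obtain ⟨h1, h2, h3⟩ := ih
      have hrk := hR _ h1
      have hsk := hR _ (le_trans hRs₀ h3)
      rw [Function.iterate_succ_apply' (maxMod f), Function.iterate_succ_apply' (maxMod f)]
      refine ⟨le_trans h1 hrk.le, maxMod_mono f hdiff (le_trans hR0.le h1) h2,
        le_trans h3 hsk.le⟩
  have hgs₀ : ∀ k : ℕ, g ((maxMod f)^[k] s₀) ≤ (muEps f ε)^[k] (g s₀) ∧
      (maxMod f)^[k] s₀ ≤ g ((maxMod f)^[k] s₀) := by
    intro k
    induction k with
    | zero =>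
      simp only [Function.iterate_zero_apply]
      exact ⟨le_rfl, (hS s₀ hSs₀ (hR s₀ hRs₀)).1⟩
    | succ k ih =>
      have hsk_ge : S ≤ (maxMod f)^[k] s₀ := le_trans hSs₀ (horbit k).2.2
      have hskR : R ≤ (maxMod f)^[k] s₀ := le_trans hRs₀ (horbit k).2.2
      have hless := hR _ hskR
      have hkey := hS _ hsk_ge hless
      constructor
      · rw [Function.iterate_succ_apply' (maxMod f), Function.iterate_succ_apply' (muEps f ε)]
        have hg0 : 0 ≤ g ((maxMod f)^[k] s₀) := by
          have := hkey.1
          linarith [lt_of_lt_of_le hR0 hskR]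
        calc g (maxMod f ((maxMod f)^[k] s₀)) ≤ (maxMod f (g ((maxMod f)^[k] s₀))) ^ ε :=
            hkey.2
          _ = muEps f ε (g ((maxMod f)^[k] s₀)) := rfl
          _ ≤ muEps f ε ((muEps f ε)^[k] (g s₀)) := by
            apply Real.rpow_le_rpow (maxMod_nonneg f hdiff hg0)
              (maxMod_mono f hdiff hg0 ih.1) hε0.le
      · rw [Function.iterate_succ_apply' (maxMod f)]
        have hSnext : S ≤ maxMod f ((maxMod f)^[k] s₀) := le_trans hsk_ge hless.le
        exact (hS _ hSnext (hR _ (le_trans hskR hless.le))).1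
  refine ⟨g s₀, ?_, ?_⟩
  · have h1 : s₀ ≤ g s₀ := by
      have := (hgs₀ 0).2
      simpa using this
    linarith [lt_of_lt_of_le hR0 hRs₀]
  · intro k
    calc (maxMod f)^[k] R ≤ (maxMod f)^[k] s₀ := (horbit k).2.1
      _ ≤ g ((maxMod f)^[k] s₀) := (hgs₀ k).2
      _ ≤ (muEps f ε)^[k] (g s₀) := (hgs₀ k).1
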